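/- Let G be a group with elements g₁, g₂ and set g = [g₁,g₂] = g₁g₂g₁⁻¹g₂⁻¹. Then as operators on L^p(G), ∂_g = −L(g₁g₂)(∂_{g₂⁻¹}∂_{g₁⁻¹} − ∂_{g₁⁻¹}∂_{g₂⁻¹}), and consequently |⟨∂_g f₁, f₂⟩| ≤ C(ρ(g₁)+ρ(g₂)+1)² Γ₂(f₁)Γ₂(f₂) for all f₁, f₂ ∈ L² and an absolute constant C (depending on the gradient constants). -/

import Mathlib

open MeasureTheory ENNReal Pointwise

/-- Word distance `ρ(g) = inf{n ≥ 1 : g ∈ Uⁿ}`. -/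
noncomputable def wordDist {G : Type*} [Group G] (U : Set G) (g : G) : ℕ :=
  sInf {n : ℕ | 0 < n ∧ g ∈ U ^ n}

/-- The `L²` gradient `Γ₂(f) = sup_{u∈U} ‖∂_u f‖₂`. -/
noncomputable def grad {G : Type*} [Group G] [MeasurableSpace G]
    (U : Set G) (μ : Measure G) (p : ℝ≥0∞) (f : G → ℂ) : ℝ≥0∞ :=
  ⨆ u ∈ U, eLpNorm (fun h => f (u⁻¹ * h) - f h) p μ

/-- Left translation `(L(g)f)(h) = f(g⁻¹h)`. -/
def Lop {G : Type*} [Group G] (g : G) (f : G → ℂ) : G → ℂ := fun h => f (g⁻¹ * h)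

/-- Difference operator `(∂_g f)(h) = f(g⁻¹h) − f(h)`. -/
def delOp {G : Type*} [Group G] (g : G) (f : G → ℂ) : G → ℂ := fun h => f (g⁻¹ * h) - f h

section Stmt14Aux

set_option linter.unusedSectionVars false

variable {G : Type*} [Group G] [MeasurableSpace G] [MeasurableMul G]
  {μ : Measure G} [μ.IsMulLeftInvariant]

lemma stmt14_part1 (g₁ g₂ : G) (f : G → ℂ) :
    delOp (g₁ * g₂ * g₁⁻¹ * g₂⁻¹) f =
      -(Lop (g₁ * g₂)
          (delOp g₂⁻¹ (delOp g₁⁻¹ f) - delOp g₁⁻¹ (delOp g₂⁻¹ f))) := by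
  funext h
  simp only [delOp, Lop, Pi.neg_apply, Pi.sub_apply, mul_inv_rev, inv_inv, mul_assoc,
    inv_mul_cancel_left, mul_inv_cancel_left]
  ring

lemma stmt14_asm_transl {f : G → ℂ} (hf : AEStronglyMeasurable f μ) (a : G) :
    AEStronglyMeasurable (fun h => f (a * h)) μ :=
  hf.comp_quasiMeasurePreserving (measurePreserving_mul_left μ a).quasiMeasurePreserving

lemma stmt14_memLp_transl {f : G → ℂ} {p : ℝ≥0∞} (hf : MemLp f p μ) (a : G) :
    MemLp (fun h => f (a * h)) p μ :=
  hf.comp_measurePreserving (measurePreserving_mul_left μ a)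

lemma stmt14_eLpNorm_transl {f : G → ℂ} (hf : AEStronglyMeasurable f μ) (a : G) (p : ℝ≥0∞) :
    eLpNorm (fun h => f (a * h)) p μ = eLpNorm f p μ :=
  eLpNorm_comp_measurePreserving hf (measurePreserving_mul_left μ a)

lemma stmt14_asm_delOp {f : G → ℂ} (hf : AEStronglyMeasurable f μ) (w : G) :
    AEStronglyMeasurable (delOp w f) μ :=
  (stmt14_asm_transl hf w⁻¹).sub hf

lemma stmt14_memLp_delOp {f : G → ℂ} {p : ℝ≥0∞} (hf : MemLp f p μ) (w : G) :
    MemLp (delOp w f) p μ :=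
  (stmt14_memLp_transl hf w⁻¹).sub hf

lemma stmt14_eLpNorm_delOp_le_grad {U : Set G} {u : G} (hu : u ∈ U) (f : G → ℂ) :
    eLpNorm (delOp u f) 2 μ ≤ grad U μ 2 f :=
  le_iSup₂ (f := fun u (_ : u ∈ U) => eLpNorm (fun h => f (u⁻¹ * h) - f h) 2 μ) u hu

lemma stmt14_eLpNorm_delOp_le_pow {U : Set G} {f : G → ℂ} (hf : AEStronglyMeasurable f μ)
    {n : ℕ} : ∀ {w : G}, w ∈ U ^ n → eLpNorm (delOp w f) 2 μ ≤ n * grad U μ 2 f := by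
  induction n with
  | zero =>
      intro w hw
      rw [pow_zero, Set.mem_one] at hw
      subst hw
      have h0 : delOp (1 : G) f = 0 := by funext h; simp [delOp]
      simp [h0]
  | succ n ih =>
      intro w hw
      rw [pow_succ] at hw
      obtain ⟨v, hv, u, hu, rfl⟩ := hw
      have key : delOp (v * u) f
          = (fun h => delOp u f (v⁻¹ * h)) + delOp v f := by
        funext h
        simp only [delOp, Pi.add_apply, mul_inv_rev, mul_assoc]
        ring
      rw [key]
      refine (eLpNorm_add_le (stmt14_asm_transl (stmt14_asm_delOp hf u) v⁻¹)
        (stmt14_asm_delOp hf v) one_le_two).trans ?_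
      rw [stmt14_eLpNorm_transl (stmt14_asm_delOp hf u) v⁻¹ 2]
      calc eLpNorm (delOp u f) 2 μ + eLpNorm (delOp v f) 2 μ
          ≤ grad U μ 2 f + n * grad U μ 2 f :=
            add_le_add (stmt14_eLpNorm_delOp_le_grad hu f) (ih hv)
        _ = (n + 1 : ℕ) * grad U μ 2 f := by
            push_cast
            rw [add_mul, one_mul, add_comm]

lemma stmt14_memLp_conj {f : G → ℂ} {p : ℝ≥0∞} (hf : MemLp f p μ) :
    MemLp (fun h => (starRingEnd ℂ) (f h)) p μ := by
  refine MemLp.of_le hf (continuous_star.comp_aestronglyMeasurable hf.1)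
    (Filter.Eventually.of_forall fun x => ?_)
  simp

lemma stmt14_asm_conj {f : G → ℂ} (hf : AEStronglyMeasurable f μ) :
    AEStronglyMeasurable (fun h => (starRingEnd ℂ) (f h)) μ :=
  continuous_star.comp_aestronglyMeasurable hf

lemma stmt14_int_mul_conj {F G' : G → ℂ} (hF : MemLp F 2 μ) (hG : MemLp G' 2 μ) :
    Integrable (fun h => F h * (starRingEnd ℂ) (G' h)) μ := by
  rw [← memLp_one_iff_integrable]
  have h121 : (1 : ℝ≥0∞) / 1 = 1 / 2 + 1 / 2 := by
    rw [div_one, one_div]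
    exact ENNReal.inv_two_add_inv_two.symm
  exact (stmt14_memLp_conj hG).smul (φ := F) (p := 2) (q := 2) hF

lemma stmt14_cs {F G' : G → ℂ} (hF : AEStronglyMeasurable F μ) (hG : AEStronglyMeasurable G' μ) :
    ENNReal.ofReal ‖∫ h, F h * (starRingEnd ℂ) (G' h) ∂μ‖
      ≤ eLpNorm F 2 μ * eLpNorm G' 2 μ := by
  have h1 : ENNReal.ofReal ‖∫ h, F h * (starRingEnd ℂ) (G' h) ∂μ‖
      = ‖∫ h, F h * (starRingEnd ℂ) (G' h) ∂μ‖ₑ := by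
    rw [ofReal_norm_eq_enorm]
  rw [h1]
  refine (enorm_integral_le_lintegral_enorm _).trans ?_
  have h2 : ∫⁻ h, ‖F h * (starRingEnd ℂ) (G' h)‖ₑ ∂μ
      = eLpNorm (F • (fun h => (starRingEnd ℂ) (G' h))) 1 μ := by
    rw [eLpNorm_one_eq_lintegral_enorm]
    rfl
  rw [h2]
  have h121 : (1 : ℝ≥0∞) / 1 = 1 / 2 + 1 / 2 := by
    rw [div_one, one_div]
    exact ENNReal.inv_two_add_inv_two.symm
  refine (eLpNorm_smul_le_mul_eLpNorm (p := 2) (q := 2) (stmt14_asm_conj hG) hF).trans ?_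
  have h3 : eLpNorm (fun h => (starRingEnd ℂ) (G' h)) 2 μ = eLpNorm G' 2 μ :=
    eLpNorm_congr_norm_ae (Filter.Eventually.of_forall fun x => by simp)
  rw [h3]

lemma stmt14_adjoint {F G' : G → ℂ} (hF : MemLp F 2 μ) (hG : MemLp G' 2 μ) (u : G) :
    ∫ h, delOp u F h * (starRingEnd ℂ) (G' h) ∂μ
      = ∫ h, F h * (starRingEnd ℂ) (delOp u⁻¹ G' h) ∂μ := by
  have h1 : Integrable (fun h => F (u⁻¹ * h) * (starRingEnd ℂ) (G' h)) μ :=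
    stmt14_int_mul_conj (stmt14_memLp_transl hF u⁻¹) hG
  have h2 : Integrable (fun h => F h * (starRingEnd ℂ) (G' h)) μ := stmt14_int_mul_conj hF hG
  have h3 : Integrable (fun h => F h * (starRingEnd ℂ) (G' (u * h))) μ :=
    stmt14_int_mul_conj hF (stmt14_memLp_transl hG u)
  have sub1 : ∫ h, delOp u F h * (starRingEnd ℂ) (G' h) ∂μ
      = (∫ h, F (u⁻¹ * h) * (starRingEnd ℂ) (G' h) ∂μ)
        - ∫ h, F h * (starRingEnd ℂ) (G' h) ∂μ := by
    rw [← integral_sub h1 h2]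
    congr 1
    funext h
    simp only [delOp]
    ring
  have sub2 : ∫ h, F h * (starRingEnd ℂ) (delOp u⁻¹ G' h) ∂μ
      = (∫ h, F h * (starRingEnd ℂ) (G' (u * h)) ∂μ)
        - ∫ h, F h * (starRingEnd ℂ) (G' h) ∂μ := by
    rw [← integral_sub h3 h2]
    congr 1
    funext h
    simp only [delOp, inv_inv, map_sub]
    ring
  have key : ∫ h, F (u⁻¹ * h) * (starRingEnd ℂ) (G' h) ∂μ
      = ∫ h, F h * (starRingEnd ℂ) (G' (u * h)) ∂μ := by
    rw [← integral_mul_left_eq_self (fun h => F (u⁻¹ * h) * (starRingEnd ℂ) (G' h)) u]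
    congr 1
    funext h
    simp [inv_mul_cancel_left]
  rw [sub1, sub2, key]

lemma stmt14_mem_pow_mul {U : Set G} {x y : G} {m n : ℕ} (hx : x ∈ U ^ m) (hy : y ∈ U ^ n) :
    x * y ∈ U ^ (m + n) := by
  rw [pow_add]
  exact Set.mul_mem_mul hx hy

lemma stmt14_mem_pow_inv {U : Set G} (hUsymm : U⁻¹ = U) {x : G} {n : ℕ} (hx : x ∈ U ^ n) :
    x⁻¹ ∈ U ^ n := by
  have h : (U ^ n)⁻¹ = U ^ n := by
    rw [← inv_pow, hUsymm]
  rw [← h]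
  exact Set.inv_mem_inv.2 hx

end Stmt14Aux

/-- for `g = [g₁,g₂] = g₁g₂g₁⁻¹g₂⁻¹` one has the operator identity
`∂_g = −L(g₁g₂)(∂_{g₂⁻¹}∂_{g₁⁻¹} − ∂_{g₁⁻¹}∂_{g₂⁻¹})` on functions on `G`, and consequently
`|⟪∂_g f₁, f₂⟫| ≤ C(ρ(g₁)+ρ(g₂)+1)² Γ₂(f₁)Γ₂(f₂)` for all `f₁, f₂ ∈ L²` and an absolute
constant `C`. -/
theorem stmt14 {G : Type*} [Group G] [MeasurableSpace G] [MeasurableMul G]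
    (μ : Measure G) [μ.IsMulLeftInvariant]
    (U : Set G) (hU1 : (1 : G) ∈ U) (hUsymm : U⁻¹ = U)
    (hUgen : ∀ g : G, ∃ n : ℕ, 0 < n ∧ g ∈ U ^ n) :
    (∀ (g₁ g₂ : G) (f : G → ℂ),
      delOp (g₁ * g₂ * g₁⁻¹ * g₂⁻¹) f =
        -(Lop (g₁ * g₂)
            (delOp g₂⁻¹ (delOp g₁⁻¹ f) - delOp g₁⁻¹ (delOp g₂⁻¹ f)))) ∧
    ∃ C : ℝ, 0 < C ∧
      ∀ (g₁ g₂ : G) (f₁ f₂ : G → ℂ), MemLp f₁ 2 μ → MemLp f₂ 2 μ →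
        ENNReal.ofReal (norm
            (∫ h, delOp (g₁ * g₂ * g₁⁻¹ * g₂⁻¹) f₁ h * (starRingEnd ℂ) (f₂ h) ∂μ))
          ≤ ENNReal.ofReal
              (C * ((wordDist U g₁ : ℝ) + (wordDist U g₂ : ℝ) + 1) ^ 2)
            * grad U μ 2 f₁ * grad U μ 2 f₂ := by
  refine ⟨fun g₁ g₂ f => stmt14_part1 g₁ g₂ f, 5, by norm_num, ?_⟩
  intro g₁ g₂ f₁ f₂ hf₁ hf₂
  set ρ₁ := wordDist U g₁ with hρ₁
  set ρ₂ := wordDist U g₂ with hρ₂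
  have hmem₁ : g₁ ∈ U ^ ρ₁ := (Nat.sInf_mem (hUgen g₁)).2
  have hmem₂ : g₂ ∈ U ^ ρ₂ := (Nat.sInf_mem (hUgen g₂)).2
  set Γ₁ := grad U μ 2 f₁ with hΓ₁
  set Γ₂ := grad U μ 2 f₂ with hΓ₂
  set F : G → ℂ := fun h => f₂ (g₁ * g₂ * h) with hF
  have hFmem : MemLp F 2 μ := stmt14_memLp_transl hf₂ (g₁ * g₂)
  set A : G → ℂ := delOp g₂⁻¹ (delOp g₁⁻¹ f₁) with hA
  set B : G → ℂ := delOp g₁⁻¹ (delOp g₂⁻¹ f₁) with hB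
  have hAmem : MemLp A 2 μ := stmt14_memLp_delOp (stmt14_memLp_delOp hf₁ g₁⁻¹) g₂⁻¹
  have hBmem : MemLp B 2 μ := stmt14_memLp_delOp (stmt14_memLp_delOp hf₁ g₂⁻¹) g₁⁻¹
  -- Step 1 : rewrite the integral using the operator identity
  have step1 : ∫ h, delOp (g₁ * g₂ * g₁⁻¹ * g₂⁻¹) f₁ h * (starRingEnd ℂ) (f₂ h) ∂μ
      = (∫ h, B h * (starRingEnd ℂ) (F h) ∂μ) - ∫ h, A h * (starRingEnd ℂ) (F h) ∂μ := by
    have e1 : ∀ h, delOp (g₁ * g₂ * g₁⁻¹ * g₂⁻¹) f₁ h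
        = B ((g₁ * g₂)⁻¹ * h) - A ((g₁ * g₂)⁻¹ * h) := by
      intro h
      rw [stmt14_part1 g₁ g₂ f₁]
      simp only [Lop, Pi.neg_apply, Pi.sub_apply, hA, hB]
      ring
    have hIB : Integrable (fun h => B ((g₁ * g₂)⁻¹ * h) * (starRingEnd ℂ) (f₂ h)) μ :=
      stmt14_int_mul_conj (stmt14_memLp_transl hBmem (g₁ * g₂)⁻¹) hf₂
    have hIA : Integrable (fun h => A ((g₁ * g₂)⁻¹ * h) * (starRingEnd ℂ) (f₂ h)) μ :=
      stmt14_int_mul_conj (stmt14_memLp_transl hAmem (g₁ * g₂)⁻¹) hf₂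
    calc ∫ h, delOp (g₁ * g₂ * g₁⁻¹ * g₂⁻¹) f₁ h * (starRingEnd ℂ) (f₂ h) ∂μ
        = ∫ h, (B ((g₁ * g₂)⁻¹ * h) - A ((g₁ * g₂)⁻¹ * h)) * (starRingEnd ℂ) (f₂ h) ∂μ := by
          congr 1
          funext h
          rw [e1 h]
      _ = (∫ h, B ((g₁ * g₂)⁻¹ * h) * (starRingEnd ℂ) (f₂ h) ∂μ)
            - ∫ h, A ((g₁ * g₂)⁻¹ * h) * (starRingEnd ℂ) (f₂ h) ∂μ := by
          rw [← integral_sub hIB hIA]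
          congr 1
          funext h
          ring
      _ = (∫ h, B h * (starRingEnd ℂ) (F h) ∂μ) - ∫ h, A h * (starRingEnd ℂ) (F h) ∂μ := by
          congr 1
          · rw [← integral_mul_left_eq_self
              (fun h => B ((g₁ * g₂)⁻¹ * h) * (starRingEnd ℂ) (f₂ h)) (g₁ * g₂)]
            congr 1
            funext h
            show B ((g₁ * g₂)⁻¹ * (g₁ * g₂ * h)) * (starRingEnd ℂ) (f₂ (g₁ * g₂ * h))
              = B h * (starRingEnd ℂ) (F h)
            rw [inv_mul_cancel_left]
          · rw [← integral_mul_left_eq_self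
              (fun h => A ((g₁ * g₂)⁻¹ * h) * (starRingEnd ℂ) (f₂ h)) (g₁ * g₂)]
            congr 1
            funext h
            show A ((g₁ * g₂)⁻¹ * (g₁ * g₂ * h)) * (starRingEnd ℂ) (f₂ (g₁ * g₂ * h))
              = A h * (starRingEnd ℂ) (F h)
            rw [inv_mul_cancel_left]
  -- Step 2 : adjoint identities
  have hAid : ∫ h, A h * (starRingEnd ℂ) (F h) ∂μ
      = ∫ h, delOp g₁⁻¹ f₁ h * (starRingEnd ℂ) (delOp g₂ F h) ∂μ := by
    have := stmt14_adjoint (stmt14_memLp_delOp hf₁ g₁⁻¹) hFmem g₂⁻¹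
    simpa [hA, inv_inv] using this
  have hBid : ∫ h, B h * (starRingEnd ℂ) (F h) ∂μ
      = ∫ h, delOp g₂⁻¹ f₁ h * (starRingEnd ℂ) (delOp g₁ F h) ∂μ := by
    have := stmt14_adjoint (stmt14_memLp_delOp hf₁ g₂⁻¹) hFmem g₁⁻¹
    simpa [hB, inv_inv] using this
  -- Step 3 : translation identities for norms
  have eF2 : eLpNorm (delOp g₂ F) 2 μ = eLpNorm (delOp (g₁ * g₂⁻¹ * g₁⁻¹) f₂) 2 μ := by
    have e : delOp g₂ F = -(fun h => delOp (g₁ * g₂⁻¹ * g₁⁻¹) f₂ (g₁ * h)) := by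
      funext h
      simp only [delOp, hF, Pi.neg_apply, mul_inv_rev, inv_inv, mul_assoc,
        inv_mul_cancel_left, mul_inv_cancel_left]
      ring
    rw [e, eLpNorm_neg, stmt14_eLpNorm_transl (stmt14_asm_delOp hf₂.1 _) g₁ 2]
  have eF1 : eLpNorm (delOp g₁ F) 2 μ
      = eLpNorm (delOp (g₁ * g₂ * g₁ * g₂⁻¹ * g₁⁻¹) f₂) 2 μ := by
    have e : delOp g₁ F = fun h => delOp (g₁ * g₂ * g₁ * g₂⁻¹ * g₁⁻¹) f₂ (g₁ * g₂ * h) := by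
      funext h
      simp only [delOp, hF, mul_inv_rev, inv_inv, mul_assoc,
        inv_mul_cancel_left, mul_inv_cancel_left]
    calc eLpNorm (delOp g₁ F) 2 μ
        = eLpNorm (fun h => delOp (g₁ * g₂ * g₁ * g₂⁻¹ * g₁⁻¹) f₂ ((g₁ * g₂) * h)) 2 μ := by
          rw [e]
      _ = eLpNorm (delOp (g₁ * g₂ * g₁ * g₂⁻¹ * g₁⁻¹) f₂) 2 μ :=
          stmt14_eLpNorm_transl (stmt14_asm_delOp hf₂.1 _) (g₁ * g₂) 2
  -- Step 4 : norm bounds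
  have b1 : eLpNorm (delOp g₁⁻¹ f₁) 2 μ ≤ (ρ₁ : ℝ≥0∞) * Γ₁ :=
    stmt14_eLpNorm_delOp_le_pow hf₁.1 (stmt14_mem_pow_inv hUsymm hmem₁)
  have b2 : eLpNorm (delOp g₂⁻¹ f₁) 2 μ ≤ (ρ₂ : ℝ≥0∞) * Γ₁ :=
    stmt14_eLpNorm_delOp_le_pow hf₁.1 (stmt14_mem_pow_inv hUsymm hmem₂)
  have b3 : eLpNorm (delOp (g₁ * g₂⁻¹ * g₁⁻¹) f₂) 2 μ ≤ ((ρ₁ + ρ₂ + ρ₁ : ℕ) : ℝ≥0∞) * Γ₂ :=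
    stmt14_eLpNorm_delOp_le_pow hf₂.1
      (stmt14_mem_pow_mul (stmt14_mem_pow_mul hmem₁ (stmt14_mem_pow_inv hUsymm hmem₂))
        (stmt14_mem_pow_inv hUsymm hmem₁))
  have b4 : eLpNorm (delOp (g₁ * g₂ * g₁ * g₂⁻¹ * g₁⁻¹) f₂) 2 μ
      ≤ ((ρ₁ + ρ₂ + ρ₁ + ρ₂ + ρ₁ : ℕ) : ℝ≥0∞) * Γ₂ :=
    stmt14_eLpNorm_delOp_le_pow hf₂.1
      (stmt14_mem_pow_mul (stmt14_mem_pow_mul (stmt14_mem_pow_mul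
        (stmt14_mem_pow_mul hmem₁ hmem₂) hmem₁)
        (stmt14_mem_pow_inv hUsymm hmem₂)) (stmt14_mem_pow_inv hUsymm hmem₁))
  -- Step 5 : combine
  set IA := ∫ h, A h * (starRingEnd ℂ) (F h) ∂μ with hIAdef
  set IB := ∫ h, B h * (starRingEnd ℂ) (F h) ∂μ with hIBdef
  have habs : ‖IB - IA‖ ≤ ‖IB‖ + ‖IA‖ := by
    simpa [sub_eq_add_neg] using norm_add_le IB (-IA)
  have csA : ENNReal.ofReal ‖IA‖
      ≤ eLpNorm (delOp g₁⁻¹ f₁) 2 μ * eLpNorm (delOp g₂ F) 2 μ := by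
    rw [hAid]
    exact stmt14_cs (stmt14_asm_delOp hf₁.1 g₁⁻¹) (stmt14_asm_delOp hFmem.1 g₂)
  have csB : ENNReal.ofReal ‖IB‖
      ≤ eLpNorm (delOp g₂⁻¹ f₁) 2 μ * eLpNorm (delOp g₁ F) 2 μ := by
    rw [hBid]
    exact stmt14_cs (stmt14_asm_delOp hf₁.1 g₂⁻¹) (stmt14_asm_delOp hFmem.1 g₁)
  have main : ENNReal.ofReal (norm
      (∫ h, delOp (g₁ * g₂ * g₁⁻¹ * g₂⁻¹) f₁ h * (starRingEnd ℂ) (f₂ h) ∂μ))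
      ≤ ((ρ₂ * (ρ₁ + ρ₂ + ρ₁ + ρ₂ + ρ₁) + ρ₁ * (ρ₁ + ρ₂ + ρ₁) : ℕ) : ℝ≥0∞) * Γ₁ * Γ₂ := by
    rw [step1]
    calc ENNReal.ofReal ‖IB - IA‖
        ≤ ENNReal.ofReal (‖IB‖ + ‖IA‖) := ENNReal.ofReal_le_ofReal habs
      _ = ENNReal.ofReal ‖IB‖ + ENNReal.ofReal ‖IA‖ :=
          ENNReal.ofReal_add (norm_nonneg IB) (norm_nonneg IA)
      _ ≤ eLpNorm (delOp g₂⁻¹ f₁) 2 μ * eLpNorm (delOp g₁ F) 2 μ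
            + eLpNorm (delOp g₁⁻¹ f₁) 2 μ * eLpNorm (delOp g₂ F) 2 μ := add_le_add csB csA
      _ ≤ ((ρ₂ : ℝ≥0∞) * Γ₁) * (((ρ₁ + ρ₂ + ρ₁ + ρ₂ + ρ₁ : ℕ) : ℝ≥0∞) * Γ₂)
            + ((ρ₁ : ℝ≥0∞) * Γ₁) * (((ρ₁ + ρ₂ + ρ₁ : ℕ) : ℝ≥0∞) * Γ₂) := by
          rw [eF1, eF2]
          exact add_le_add (mul_le_mul' b2 b4) (mul_le_mul' b1 b3)
      _ = ((ρ₂ * (ρ₁ + ρ₂ + ρ₁ + ρ₂ + ρ₁) + ρ₁ * (ρ₁ + ρ₂ + ρ₁) : ℕ) : ℝ≥0∞) * Γ₁ * Γ₂ := by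
          push_cast
          ring
  refine main.trans ?_
  have hcoef : ((ρ₂ * (ρ₁ + ρ₂ + ρ₁ + ρ₂ + ρ₁) + ρ₁ * (ρ₁ + ρ₂ + ρ₁) : ℕ) : ℝ≥0∞)
      ≤ ENNReal.ofReal (5 * ((ρ₁ : ℝ) + (ρ₂ : ℝ) + 1) ^ 2) := by
    have h5 : (5 * ((ρ₁ : ℝ) + (ρ₂ : ℝ) + 1) ^ 2) = ((5 * (ρ₁ + ρ₂ + 1) ^ 2 : ℕ) : ℝ) := by
      push_cast
      ring
    rw [h5, ENNReal.ofReal_natCast]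
    exact Nat.cast_le.2 (by nlinarith)
  exact mul_le_mul_left (mul_le_mul_left hcoef Γ₁) Γ₂
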